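/- The limit c₂ := lim_{k→∞} ( Σ_{n=1}^{k} arctan(1/√n) − 2√k ) exists, i.e. the sequence k ↦ Σ_{n=1}^{k} arctan(1/√n) − 2√k converges to a real number (the 'square root spiral constant' of the spiral of Theodorus). -/

import Mathlib

open Filter Finset Real

private lemma my_arctan_le_self {x : ℝ} (hx : 0 ≤ x) : Real.arctan x ≤ x := by
  have h : MonotoneOn (fun y : ℝ => y - Real.arctan y) (Set.Ici 0) := by
    apply monotoneOn_of_deriv_nonneg (convex_Ici 0)
    · exact (continuous_id.sub Real.continuous_arctan).continuousOn
    · exact fun y _ => ((differentiableAt_fun_id.sub (Real.differentiableAt_arctan y))).differentiableWithinAt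
    · intro y _
      have hd : HasDerivAt (fun y : ℝ => y - Real.arctan y) (1 - 1 / (1 + y ^ 2)) y :=
        (hasDerivAt_id y).sub (Real.hasDerivAt_arctan y)
      rw [hd.deriv]
      have h1 : (0:ℝ) < 1 + y ^ 2 := by positivity
      have : 1 / (1 + y ^ 2) ≤ 1 := by
        rw [div_le_one h1]; nlinarith
      linarith
  have := h (Set.self_mem_Ici) (Set.mem_Ici.mpr hx) hx
  simpa [Real.arctan_zero] using this

private lemma my_sub_cube_le_arctan {x : ℝ} (hx : 0 ≤ x) : x - x ^ 3 ≤ Real.arctan x := by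
  have h : MonotoneOn (fun y : ℝ => Real.arctan y - y + y ^ 3) (Set.Ici 0) := by
    apply monotoneOn_of_deriv_nonneg (convex_Ici 0)
    · exact ((Real.continuous_arctan.sub continuous_id).add (continuous_pow 3)).continuousOn
    · intro y _
      exact (((Real.differentiableAt_arctan y).sub differentiableAt_fun_id).add
        (differentiableAt_pow 3)).differentiableWithinAt
    · intro y _
      have hd : HasDerivAt (fun y : ℝ => Real.arctan y - y + y ^ 3)
          (1 / (1 + y ^ 2) - 1 + 3 * y ^ 2) y := by
        have := ((Real.hasDerivAt_arctan y).sub (hasDerivAt_id' y)).add (hasDerivAt_pow 3 y)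
        rw [show (fun y : ℝ => Real.arctan y - y + y ^ 3) = ((Real.arctan - fun x => x) + fun x => x ^ 3) from rfl]
        simpa using this.congr_deriv (by ring)
      rw [hd.deriv]
      have h1 : (0:ℝ) < 1 + y ^ 2 := by positivity
      have : 1 - y ^ 2 ≤ 1 / (1 + y ^ 2) := by
        rw [le_div_iff₀ h1]; nlinarith
      nlinarith
  have := h (Set.self_mem_Ici) (Set.mem_Ici.mpr hx) hx
  simp only [Real.arctan_zero] at this
  nlinarith [this]

/-- The 'square root spiral constant' exists: the sequence
`k ↦ ∑_{n=1}^{k} arctan(1/√n) − 2√k` converges to a real number. -/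
theorem sqrt_spiral_constant_exists :
    ∃ c₂ : ℝ,
      Tendsto
        (fun k : ℕ =>
          (∑ n ∈ Finset.Icc 1 k, Real.arctan (1 / Real.sqrt n)) - 2 * Real.sqrt k)
        atTop (nhds c₂) := by
  set d : ℕ → ℝ := fun j =>
    Real.arctan (1 / Real.sqrt j) - (2 * Real.sqrt j - 2 * Real.sqrt ((j : ℝ) - 1)) with hd
  -- key bound
  have hbound : ∀ j : ℕ, 1 ≤ j → |d j| ≤ 2 * (j : ℝ) ^ (-(3/2) : ℝ) := by
    intro j hj
    have hj1 : (1:ℝ) ≤ (j:ℝ) := by exact_mod_cast hj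
    set s : ℝ := Real.sqrt j with hs
    set t : ℝ := Real.sqrt ((j : ℝ) - 1) with ht
    have hs1 : 1 ≤ s := by
      rw [hs, show (1:ℝ) = Real.sqrt 1 by simp]
      exact Real.sqrt_le_sqrt hj1
    have hs0 : 0 < s := lt_of_lt_of_le one_pos hs1
    have ht0 : 0 ≤ t := Real.sqrt_nonneg _
    have hsq : s ^ 2 - t ^ 2 = 1 := by
      rw [hs, ht, Real.sq_sqrt (by positivity), Real.sq_sqrt (by linarith)]
      ring
    have hts : t < s := by nlinarith
    have hst0 : 0 < s + t := by linarith
    have hst1 : (s - t) * (s + t) = 1 := by nlinarith [hsq]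
    -- 2(s - t) = 2/(s+t)
    have h2st : 2 * s - 2 * t = 2 / (s + t) := by
      rw [eq_div_iff (ne_of_gt hst0)]; nlinarith [hst1]
    set x : ℝ := 1 / s with hx
    have hx0 : 0 < x := by positivity
    -- x ≤ 2(s-t) ≤ x + x^3
    have hlow : x ≤ 2 * s - 2 * t := by
      rw [h2st, hx, div_le_div_iff₀ hs0 hst0]; linarith
    have hkey : s ^ 2 * (s - t) ≤ s + t := by
      have h3 : s ^ 2 * (s - t) * (s + t) ≤ (s + t) * (s + t) := by nlinarith [hst1]
      exact (mul_le_mul_iff_of_pos_right hst0).mp h3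
    have hhigh : 2 * s - 2 * t ≤ x + x ^ 3 := by
      have h1 : x + x ^ 3 = (s ^ 2 + 1) / s ^ 3 := by
        rw [hx]; field_simp
      rw [h2st, h1, div_le_div_iff₀ hst0 (by positivity)]
      nlinarith [hkey]
    have ha1 : Real.arctan x ≤ x := my_arctan_le_self hx0.le
    have ha2 : x - x ^ 3 ≤ Real.arctan x := my_sub_cube_le_arctan hx0.le
    have hx3 : 0 ≤ x ^ 3 := by positivity
    have habs : |d j| ≤ 2 * x ^ 3 := by
      rw [hd]
      simp only
      rw [← hs, ← ht, ← hx, abs_le]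
      constructor
      · linarith
      · linarith
    have hxval : x ^ 3 = (j : ℝ) ^ (-(3/2) : ℝ) := by
      rw [hx, div_pow, one_pow, hs, Real.sqrt_eq_rpow,
        ← Real.rpow_natCast ((j:ℝ) ^ ((1:ℝ)/2)) 3, ← Real.rpow_mul (Nat.cast_nonneg j),
        show (1:ℝ)/2 * ((3:ℕ):ℝ) = (3/2 : ℝ) by norm_num,
        Real.rpow_neg (Nat.cast_nonneg j), one_div]
    rw [← hxval]; exact habs
  -- summability
  have hsum : Summable d := by
    rw [← summable_nat_add_iff 1]
    apply Summable.of_norm_bounded (g := fun n : ℕ => 2 * ((n + 1 : ℕ) : ℝ) ^ (-(3/2) : ℝ))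
    · have : Summable (fun n : ℕ => (n : ℝ) ^ (-(3/2) : ℝ)) :=
        Real.summable_nat_rpow.mpr (by norm_num)
      exact ((summable_nat_add_iff 1).mpr this).mul_left 2
    · intro n
      exact hbound (n + 1) (Nat.le_add_left 1 n)
  obtain ⟨c, hc⟩ := hsum
  refine ⟨c, ?_⟩
  have hEq : ∀ k : ℕ,
      (∑ n ∈ Finset.Icc 1 k, Real.arctan (1 / Real.sqrt n)) - 2 * Real.sqrt k
        = ∑ i ∈ Finset.range (k + 1), d i := by
    intro k
    induction k with
    | zero =>
        have h0 : Real.sqrt ((0:ℝ) - 1) = 0 := Real.sqrt_eq_zero_of_nonpos (by norm_num)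
        simp [hd, h0, Real.sqrt_eq_zero_of_nonpos (by norm_num : (-1:ℝ) ≤ 0)]
    | succ k ih =>
        rw [Finset.sum_range_succ, ← ih, Finset.sum_Icc_succ_top (Nat.le_add_left 1 k)]
        simp only [hd, Nat.cast_succ, add_sub_cancel_right]
        ring
  have h1 : Tendsto (fun n : ℕ => ∑ i ∈ Finset.range n, d i) atTop (nhds c) :=
    hc.tendsto_sum_nat
  have h2 : Tendsto (fun k : ℕ => ∑ i ∈ Finset.range (k + 1), d i) atTop (nhds c) :=
    h1.comp (tendsto_add_atTop_nat 1)
  exact (funext hEq : _) ▸ h2
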